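/- For n = 4 and b = (b1,b2,b3,b4) ∈ Z_{≥0}^4 with b1+b2+b3+b4 even and b4 < min(b2+b3−b1, b1+b3−b2, b1+b2−b3), the number of symmetric 4×4 nonnegative integer matrices with zero diagonal and row sums b1,b2,b3,b4 equals (b4+2 choose 2). -/

import Mathlib

set_option maxHeartbeats 2000000

lemma card_tri (n : ℕ) : Nat.card {p : ℕ × ℕ // p.1 + p.2 ≤ n} = (n+2).choose 2 := by
  have hset : {p : ℕ × ℕ | p.1 + p.2 ≤ n}
      = ↑((Finset.range (n+1)).biUnion (fun m => Finset.HasAntidiagonal.antidiagonal m)) := by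
    ext p
    simp [Finset.HasAntidiagonal.mem_antidiagonal]
  have : Nat.card {p : ℕ × ℕ // p.1 + p.2 ≤ n}
      = ((Finset.range (n+1)).biUnion (fun m => Finset.HasAntidiagonal.antidiagonal m)).card := by
    rw [show {p : ℕ × ℕ // p.1 + p.2 ≤ n} = ↥{p : ℕ × ℕ | p.1 + p.2 ≤ n} from rfl,
      Nat.card_coe_set_eq, hset, Set.ncard_coe_finset]
  rw [this, Finset.card_biUnion]
  · have : ∀ m, (Finset.HasAntidiagonal.antidiagonal m).card = m + 1 := fun m => Finset.Nat.card_antidiagonal m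
    simp only [this]
    have h2 : ∑ i ∈ Finset.range (n+2), i = ∑ i ∈ Finset.range (n+1), (i+1) + 0 :=
      Finset.sum_range_succ' _ _
    have h3 : (∑ i ∈ Finset.range (n+2), i) * 2 = (n+2) * (n+1) :=
      Finset.sum_range_id_mul_two _
    have h4 : (n+2).choose 2 = (n+2) * (n+1) / 2 := by
      rw [Nat.choose_two_right]; rfl
    omega
  · intro i _ j _ hij
    simp only [Finset.disjoint_left, Finset.HasAntidiagonal.mem_antidiagonal]
    intro p hp hq
    omega

/-- Chamber 4 of the vector partition function for the incidence matrix of K₄. -/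
theorem K4_chamber_four (b1 b2 b3 b4 : ℕ)
    (heven : Even (b1 + b2 + b3 + b4))
    (h1 : b4 + b1 < b2 + b3) (h2 : b4 + b2 < b1 + b3) (h3 : b4 + b3 < b1 + b2) :
    Nat.card {M : Matrix (Fin 4) (Fin 4) ℕ //
        M.IsSymm ∧ (∀ i, M i i = 0) ∧ ∀ i, ∑ j, M i j = ![b1, b2, b3, b4] i}
      = Nat.choose (b4 + 2) 2 := by
  obtain ⟨k, hk⟩ := heven
  rw [← card_tri b4]
  apply Nat.card_congr
  refine
    { toFun := fun M =>
        ⟨(M.1 3 0, M.1 3 1), by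
          obtain ⟨hs, hd, hr⟩ := M.2
          have h := hr 3
          rw [Fin.sum_univ_four] at h
          simp at h
          omega⟩
      invFun := fun p =>
        ⟨!![0, k - b3 - (p.1.1 + p.1.2), k - b2 - (b4 - p.1.2), p.1.1;
            k - b3 - (p.1.1 + p.1.2), 0, k - b1 - (b4 - p.1.1), p.1.2;
            k - b2 - (b4 - p.1.2), k - b1 - (b4 - p.1.1), 0, b4 - (p.1.1 + p.1.2);
            p.1.1, p.1.2, b4 - (p.1.1 + p.1.2), 0],
          by
            obtain ⟨⟨a, c⟩, hac⟩ := p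
            refine ⟨?_, ?_, ?_⟩
            · ext i j
              fin_cases i <;> fin_cases j <;> rfl
            · intro i; fin_cases i <;> rfl
            · intro i
              fin_cases i <;>
                simp [Fin.sum_univ_four] <;> omega⟩
      left_inv := ?_
      right_inv := ?_ }
  · intro ⟨M, hs, hd, hr⟩
    have hs' : ∀ i j, M j i = M i j := fun i j => hs.apply i j
    have e0 := hr 0; have e1 := hr 1; have e2 := hr 2; have e3 := hr 3
    rw [Fin.sum_univ_four] at e0 e1 e2 e3
    simp at e0 e1 e2 e3
    have d0 := hd 0; have d1 := hd 1; have d2 := hd 2; have d3 := hd 3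
    have s01 := hs' 0 1; have s02 := hs' 0 2; have s03 := hs' 0 3
    have s12 := hs' 1 2; have s13 := hs' 1 3; have s23 := hs' 2 3
    refine Subtype.ext ?_
    ext i j
    fin_cases i <;> fin_cases j <;> simp <;> omega
  · intro ⟨⟨a, c⟩, hac⟩
    refine Subtype.ext ?_
    simp
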